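/- Let X₁ be an integer-valued random variable with E|X₁| < 2·P(X₁ = 1), and let φ be its characteristic function. Then for all x, y ∈ ℝ, |φ(2πx) - φ(2πy)| ≥ (8·P(X₁=1) - 4·E|X₁|)·‖x - y‖. -/

import Mathlib

open MeasureTheory Real

/-- Distance from a real number to the nearest integer. -/
noncomputable def nint (x : ℝ) : ℝ := |x - round x|

lemma abs_exp_I_sub_one' (t : ℝ) :
    ‖Complex.exp (Complex.I * t) - 1‖ = 2 * |Real.sin (t / 2)| := by
  have h : Complex.exp (Complex.I * t) - 1 =
      Complex.mk (Real.cos t - 1) (Real.sin t) := by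
    rw [mul_comm, Complex.exp_mul_I]
    apply Complex.ext <;> simp [Complex.cos_ofReal_re, Complex.sin_ofReal_re]
  rw [h, Complex.norm_def, Complex.normSq_mk]
  have hc : Real.cos t = 1 - 2 * Real.sin (t/2) ^ 2 := by
    have h1 := Real.cos_two_mul (t/2)
    have h2 := Real.sin_sq_add_cos_sq (t/2)
    have h3 : 2 * (t/2) = t := by ring
    rw [h3] at h1
    nlinarith
  have : (Real.cos t - 1) * (Real.cos t - 1) + Real.sin t * Real.sin t
      = (2 * |Real.sin (t/2)|)^2 := by
    have h2 : Real.sin t * Real.sin t = 1 - Real.cos t * Real.cos t := by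
      nlinarith [Real.sin_sq_add_cos_sq t]
    rw [h2, hc, mul_pow, sq_abs]
    ring
  rw [this, Real.sqrt_sq (by positivity)]

lemma abs_sin_int_mul_le' (k : ℤ) (θ : ℝ) : |Real.sin (k * θ)| ≤ |(k:ℝ)| * |Real.sin θ| := by
  have hnat : ∀ n : ℕ, |Real.sin (n * θ)| ≤ (n:ℝ) * |Real.sin θ| := by
    intro n
    induction n with
    | zero => simp
    | succ n ih =>
      have he : Real.sin ((n+1 : ℕ) * θ)
          = Real.sin (n * θ) * Real.cos θ + Real.cos (n * θ) * Real.sin θ := by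
        push_cast; rw [add_mul, one_mul, Real.sin_add]
      rw [he]
      have b1 := Real.abs_cos_le_one θ
      have b2 := Real.abs_cos_le_one ((n:ℝ) * θ)
      have n1 := abs_nonneg (Real.sin ((n:ℝ) * θ))
      have n2 := abs_nonneg (Real.sin θ)
      calc |Real.sin (n * θ) * Real.cos θ + Real.cos (n * θ) * Real.sin θ|
          ≤ |Real.sin (n * θ) * Real.cos θ| + |Real.cos (n * θ) * Real.sin θ| := abs_add_le _ _
        _ = |Real.sin (n * θ)| * |Real.cos θ| + |Real.cos (n * θ)| * |Real.sin θ| := by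
            rw [abs_mul, abs_mul]
        _ ≤ ((n+1 : ℕ):ℝ) * |Real.sin θ| := by
            push_cast
            nlinarith
  obtain ⟨n, rfl | rfl⟩ : ∃ n : ℕ, k = (n:ℤ) ∨ k = -(n:ℤ) := ⟨k.natAbs, Int.natAbs_eq k⟩
  · push_cast
    simpa [abs_of_nonneg (Nat.cast_nonneg n : (0:ℝ) ≤ n)] using hnat n
  · push_cast [neg_mul, Real.sin_neg, abs_neg]
    simpa [abs_of_nonneg (Nat.cast_nonneg n : (0:ℝ) ≤ n)] using hnat n

lemma two_nint_le' (h : ℝ) : 2 * nint h ≤ |Real.sin (π * h)| := by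
  have habs : |Real.sin (π * h)| = |Real.sin (π * (h - round h))| := by
    have he : π * h = π * (h - round h) + (round h : ℝ) * π := by ring
    rw [he, Real.sin_add_int_mul_pi, abs_mul]
    rcases Int.even_or_odd (round h) with he2 | he2
    · rw [he2.neg_one_zpow]; simp
    · rw [Odd.neg_one_zpow he2]; simp
  rw [habs]
  set t := h - (round h : ℝ) with ht
  have ht2 : |t| ≤ 1/2 := by simpa [ht] using abs_sub_round h
  have hkey : |Real.sin (π * t)| = Real.sin (π * |t|) := by
    rcases abs_cases t with ⟨h1, h2⟩ | ⟨h1, h2⟩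
    · rw [h1, abs_of_nonneg]
      exact Real.sin_nonneg_of_nonneg_of_le_pi (by positivity)
        (by nlinarith [Real.pi_pos, ht2, h1])
    · rw [h1, mul_neg, Real.sin_neg, abs_of_nonpos]
      apply Real.sin_nonpos_of_nonpos_of_neg_pi_le
      · nlinarith [Real.pi_pos]
      · nlinarith [Real.pi_pos, ht2, h1]
  rw [hkey]
  have key : 2 / π * (π * |t|) ≤ Real.sin (π * |t|) :=
    Real.mul_le_sin (by positivity) (by nlinarith [Real.pi_pos, ht2])
  have he : 2 / π * (π * |t|) = 2 * |t| := by field_simp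
  rw [he] at key
  simpa [nint, ht] using key

lemma exp_diff_abs (a b : ℝ) :
    ‖Complex.exp (Complex.I * (a:ℂ)) - Complex.exp (Complex.I * (b:ℂ))‖
      = 2 * |Real.sin ((a - b) / 2)| := by
  have h : Complex.exp (Complex.I * (a:ℂ)) - Complex.exp (Complex.I * (b:ℂ))
      = Complex.exp (Complex.I * (b:ℂ)) * (Complex.exp (Complex.I * ((a - b : ℝ):ℂ)) - 1) := by
    rw [mul_sub, mul_one, ← Complex.exp_add]
    push_cast
    ring_nf
  rw [h, norm_mul, mul_comm Complex.I ((b:ℝ):ℂ), Complex.norm_exp_ofReal_mul_I, one_mul,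
    abs_exp_I_sub_one']

theorem stmt9 {Ω : Type*} [MeasurableSpace Ω] (μ : Measure Ω) [IsProbabilityMeasure μ]
    (X : Ω → ℝ) (hmeas : Measurable X)
    (hint : ∀ ω, ∃ k : ℤ, X ω = (k : ℝ))
    (hX : Integrable X μ)
    (hmom : ∫ ω, |X ω| ∂μ < 2 * (μ {ω | X ω = 1}).toReal)
    (φ : ℝ → ℂ)
    (hφ : ∀ t : ℝ, φ t = ∫ ω, Complex.exp (Complex.I * ((t * X ω : ℝ) : ℂ)) ∂μ) :
    ∀ x y : ℝ,
      (8 * (μ {ω | X ω = 1}).toReal - 4 * ∫ ω, |X ω| ∂μ) * nint (x - y)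
        ≤ ‖φ (2 * π * x) - φ (2 * π * y)‖ := by
  intro x y
  set A : Set Ω := {ω | X ω = 1} with hAdef
  have hA : MeasurableSet A := hmeas (measurableSet_singleton 1)
  set p : ℝ := (μ A).toReal with hp
  set M : ℝ := ∫ ω, |X ω| ∂μ with hM
  set s : ℝ := |Real.sin (π * (x - y))| with hs
  have hs0 : 0 ≤ s := abs_nonneg _
  -- integrability of the exponentials
  have hexp_int : ∀ t : ℝ,
      Integrable (fun ω => Complex.exp (Complex.I * ((t * X ω : ℝ) : ℂ))) μ := by
    intro t
    have hm : Measurable (fun ω => Complex.exp (Complex.I * ((t * X ω : ℝ) : ℂ))) :=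
      Complex.measurable_exp.comp
        (measurable_const.mul (Complex.measurable_ofReal.comp (hmeas.const_mul t)))
    refine (integrable_const (1:ℝ)).mono' hm.aestronglyMeasurable ?_
    filter_upwards with ω
    rw [mul_comm, Complex.norm_exp_ofReal_mul_I]
  have hf : Integrable (fun ω => Complex.exp (Complex.I * ((2 * π * x * X ω : ℝ) : ℂ))
      - Complex.exp (Complex.I * ((2 * π * y * X ω : ℝ) : ℂ))) μ :=
    (hexp_int (2*π*x)).sub (hexp_int (2*π*y))
  have hdiff : φ (2 * π * x) - φ (2 * π * y)
      = ∫ ω, (Complex.exp (Complex.I * ((2 * π * x * X ω : ℝ) : ℂ))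
          - Complex.exp (Complex.I * ((2 * π * y * X ω : ℝ) : ℂ))) ∂μ := by
    rw [hφ, hφ, ← integral_sub (hexp_int (2*π*x)) (hexp_int (2*π*y))]
  -- pointwise bound
  have hptbound : ∀ ω, ‖Complex.exp (Complex.I * ((2 * π * x * X ω : ℝ) : ℂ))
      - Complex.exp (Complex.I * ((2 * π * y * X ω : ℝ) : ℂ))‖ ≤ 2 * s * |X ω| := by
    intro ω
    obtain ⟨k, hk⟩ := hint ω
    rw [exp_diff_abs]
    have h1 : (2 * π * x * X ω - 2 * π * y * X ω) / 2 = (k:ℝ) * (π * (x - y)) := by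
      rw [hk]; ring
    rw [h1]
    have h2 := abs_sin_int_mul_le' k (π * (x - y))
    have h3 : |X ω| = |(k:ℝ)| := by rw [hk]
    rw [h3, hs]
    nlinarith [abs_nonneg (Real.sin (π * (x-y))), abs_nonneg ((k:ℝ))]
  -- integral over A
  have hIA : ∫ ω in A, (Complex.exp (Complex.I * ((2 * π * x * X ω : ℝ) : ℂ))
      - Complex.exp (Complex.I * ((2 * π * y * X ω : ℝ) : ℂ))) ∂μ
      = (μ A).toReal • (Complex.exp (Complex.I * ((2 * π * x : ℝ) : ℂ))
        - Complex.exp (Complex.I * ((2 * π * y : ℝ) : ℂ))) := by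
    rw [← measureReal_def, ← setIntegral_const]
    apply setIntegral_congr_fun hA
    intro ω hω
    have hω1 : X ω = 1 := hω
    simp only [hω1]
    norm_num
  have habsA : ‖∫ ω in A, (Complex.exp (Complex.I * ((2 * π * x * X ω : ℝ) : ℂ))
      - Complex.exp (Complex.I * ((2 * π * y * X ω : ℝ) : ℂ))) ∂μ‖ = p * (2 * s) := by
    rw [hIA, Complex.real_smul, norm_mul, Complex.norm_real, Real.norm_eq_abs, exp_diff_abs]
    have h1 : (2 * π * x - 2 * π * y) / 2 = π * (x - y) := by ring
    rw [h1, ← hs, ← hp, abs_of_nonneg ENNReal.toReal_nonneg]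
  -- integral over Aᶜ
  have habsAc : ‖∫ ω in Aᶜ, (Complex.exp (Complex.I * ((2 * π * x * X ω : ℝ) : ℂ))
      - Complex.exp (Complex.I * ((2 * π * y * X ω : ℝ) : ℂ))) ∂μ‖ ≤ 2 * s * (M - p) := by
    have hXabs : Integrable (fun ω => |X ω|) μ := hX.abs
    have hXA : ∫ ω in A, |X ω| ∂μ = p := by
      have : ∫ ω in A, |X ω| ∂μ = ∫ _ω in A, (1:ℝ) ∂μ := by
        apply setIntegral_congr_fun hA
        intro ω hω
        have hω1 : X ω = 1 := hω
        simp only [hω1]; norm_num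
      rw [this, setIntegral_const, smul_eq_mul, mul_one, hp, measureReal_def]
    have hsplit : ∫ ω in Aᶜ, |X ω| ∂μ = M - p := by
      have h := integral_add_compl hA hXabs
      have hMM : ∫ ω in A, |X ω| ∂μ + ∫ ω in Aᶜ, |X ω| ∂μ = M := h
      linarith [hXA]
    calc ‖∫ ω in Aᶜ, (Complex.exp (Complex.I * ((2 * π * x * X ω : ℝ) : ℂ))
          - Complex.exp (Complex.I * ((2 * π * y * X ω : ℝ) : ℂ))) ∂μ‖
        ≤ ∫ ω in Aᶜ, ‖Complex.exp (Complex.I * ((2 * π * x * X ω : ℝ) : ℂ))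
          - Complex.exp (Complex.I * ((2 * π * y * X ω : ℝ) : ℂ))‖ ∂μ := by
          simpa using
            norm_integral_le_integral_norm (μ := μ.restrict Aᶜ)
              (fun ω => Complex.exp (Complex.I * ((2 * π * x * X ω : ℝ) : ℂ))
                - Complex.exp (Complex.I * ((2 * π * y * X ω : ℝ) : ℂ)))
      _ ≤ ∫ ω in Aᶜ, 2 * s * |X ω| ∂μ := by
          apply setIntegral_mono_on
          · exact hf.norm.integrableOn
          · exact (hXabs.const_mul (2 * s)).integrableOn
          · exact hA.compl
          · exact fun ω _ => hptbound ω
      _ = 2 * s * ∫ ω in Aᶜ, |X ω| ∂μ := integral_const_mul _ _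
      _ = 2 * s * (M - p) := by rw [hsplit]
  -- combine
  have hkey : p * (2 * s) - 2 * s * (M - p) ≤ ‖φ (2 * π * x) - φ (2 * π * y)‖ := by
    rw [hdiff, ← integral_add_compl hA hf]
    set IA := ∫ ω in A, (Complex.exp (Complex.I * ((2 * π * x * X ω : ℝ) : ℂ))
      - Complex.exp (Complex.I * ((2 * π * y * X ω : ℝ) : ℂ))) ∂μ
    set IC := ∫ ω in Aᶜ, (Complex.exp (Complex.I * ((2 * π * x * X ω : ℝ) : ℂ))
      - Complex.exp (Complex.I * ((2 * π * y * X ω : ℝ) : ℂ))) ∂μ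
    have htri : ‖IA‖ ≤ ‖IA + IC‖ + ‖IC‖ := by
      have heq : IA = (IA + IC) - IC := by ring
      calc ‖IA‖ = ‖(IA + IC) - IC‖ := by rw [← heq]
        _ ≤ ‖IA + IC‖ + ‖IC‖ := norm_sub_le _ _
        _ = ‖IA + IC‖ + ‖IC‖ := by
            rfl
    have h1 : ‖IA‖ = p * (2 * s) := habsA
    have h2 : ‖IC‖ ≤ 2 * s * (M - p) := habsAc
    linarith
  have hn : 2 * nint (x - y) ≤ s := two_nint_le' (x - y)
  have hnn : 0 ≤ nint (x - y) := abs_nonneg _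
  have hcoef : 0 ≤ 4 * p - 2 * M := by linarith
  nlinarith [mul_le_mul_of_nonneg_left hn hcoef]
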